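/- On U_d, the partial derivative ∂/∂x_{d-1} of the function √(x_1 x_2 ⋯ x_{d+2}) (with x_d, x_{d+1}, x_{d+2} given by Lemma on x_d, x_{d+1}, x_{d+2}) vanishes at a point if and only if x_d = x_{d+1} at that point. Equivalently, the vanishing is equivalent to x_1 x_2 ⋯ x_{d-1} = F[1,d-1] · F[2,d-1]. -/

import Mathlib

/-- The polynomial `F^{(n)}`, with
`F^{(n)}(x_1,...,x_n) = F^{(n-1)}(x_1,...,x_{n-1}) - x_n F^{(n-2)}(x_1,...,x_{n-2})`,
`F^{(0)} = F^{(-1)} = 1`. -/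
def Frec : ℕ → (ℕ → ℝ) → ℝ
  | 0, _ => 1
  | 1, x => 1 - x 1
  | (n + 2), x => Frec (n + 1) x - x (n + 2) * Frec n x

/-- `FF x i j = F[i,j] = F^{(j-i+1)}(x_i, ..., x_j)`, with `F[i,j] = 1` for `j < i`. -/
def FF (x : ℕ → ℝ) (i j : ℕ) : ℝ := Frec (j + 1 - i) (fun k => x (i + k - 1))

lemma Frec_congr : ∀ (n : ℕ) (x y : ℕ → ℝ),
    (∀ k, 1 ≤ k → k ≤ n → x k = y k) → Frec n x = Frec n y
  | 0, _, _, _ => rfl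
  | 1, x, y, h => by simp [Frec, h 1 le_rfl le_rfl]
  | (n+2), x, y, h => by
    simp only [Frec]
    rw [Frec_congr (n+1) x y (fun k h1 h2 => h k h1 (by omega)),
        Frec_congr n x y (fun k h1 h2 => h k h1 (by omega)),
        h (n+2) (by omega) le_rfl]

lemma Frec_succ (k : ℕ) (y : ℕ → ℝ) :
    Frec (k+1) y = Frec k y - y (k+1) * Frec (k-1) y := by
  cases k with
  | zero => simp [Frec]
  | succ j => rfl

lemma FF_one (x : ℕ → ℝ) (j : ℕ) : FF x 1 j = Frec j x := by
  unfold FF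
  have h : j + 1 - 1 = j := by omega
  rw [h]
  exact Frec_congr j _ _ (fun k h1 h2 => by congr 1; omega)

lemma FF_two (x : ℕ → ℝ) (j : ℕ) : FF x 2 j = Frec (j-1) (fun i => x (i+1)) := by
  unfold FF
  have h : j + 1 - 2 = j - 1 := by omega
  rw [h]
  exact Frec_congr _ _ _ (fun k h1 h2 => by congr 1; omega)

lemma Wlem : ∀ (k : ℕ) (x : ℕ → ℝ),
    Frec k x * Frec k (fun j => x (j+1)) - Frec (k+1) x * Frec (k-1) (fun j => x (j+1))
      = ∏ j ∈ Finset.Icc 1 (k+1), x j := by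
  intro k
  induction k with
  | zero => intro x; simp [Frec]
  | succ k ih =>
    intro x
    have h1 := Frec_succ (k+1) x
    have h2 := Frec_succ k (fun j => x (j+1))
    have h3 : ∏ j ∈ Finset.Icc 1 (k+2), x j = (∏ j ∈ Finset.Icc 1 (k+1), x j) * x (k+2) :=
      Finset.prod_Icc_succ_top (by omega) x
    rw [show (k+1)-1 = k from rfl] at h1 ⊢
    rw [h3, h1, h2, ← ih x]
    ring

lemma ident (k : ℕ) (x : ℕ → ℝ) :
    Frec k x * Frec (k+1) (fun j => x (j+1)) - Frec (k+2) x * Frec (k-1) (fun j => x (j+1))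
      = ∏ j ∈ Finset.Icc 1 (k+1), x j := by
  have h1 := Frec_succ (k+1) x
  have h2 := Frec_succ k (fun j => x (j+1))
  rw [show (k+1)-1 = k from rfl] at h1
  rw [h1, h2, ← Wlem k x]
  ring

/-- On `U_d`, the function `√(x_1 ⋯ x_{d+2})` — which, after substituting the formulas
`x_d = F[1,d-1]/F[1,d-2]`, `x_{d+1} = x_1⋯x_{d-1}/(F[1,d-2]F[2,d-1])`,
`x_{d+2} = F[1,d-1]/F[2,d-1]`, equals
`G(x_{d-1}) = (x_1 ⋯ x_{d-1} · F[1,d-1]) / (F[1,d-2] · F[2,d-1])` viewed as a function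
of the last coordinate `x_{d-1}` — has vanishing partial derivative `∂/∂x_{d-1}` at a
point of `U_d` if and only if `x_d = x_{d+1}` there; equivalently, if and only if
`x_1 x_2 ⋯ x_{d-1} = F[1,d-1] · F[2,d-1]`. -/
theorem partial_derivative_vanishes_iff (d : ℕ) (hd : 2 ≤ d) (x : ℕ → ℝ)
    (hpos : ∀ i, 1 ≤ i → i ≤ d - 1 → 0 < x i)
    (hFpos : ∀ i, 1 ≤ i → i ≤ d - 1 → 0 < FF x 1 i)
    (G : ℝ → ℝ)
    (hG : ∀ s : ℝ, G s =
      (∏ k ∈ Finset.Icc 1 (d - 1), Function.update x (d - 1) s k) *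
        FF (Function.update x (d - 1) s) 1 (d - 1) /
        (FF (Function.update x (d - 1) s) 1 (d - 2) *
          FF (Function.update x (d - 1) s) 2 (d - 1))) :
    (deriv G (x (d - 1)) = 0 ↔
      FF x 1 (d - 1) / FF x 1 (d - 2) =
        (∏ k ∈ Finset.Icc 1 (d - 1), x k) / (FF x 1 (d - 2) * FF x 2 (d - 1))) ∧
    (deriv G (x (d - 1)) = 0 ↔
      (∏ k ∈ Finset.Icc 1 (d - 1), x k) = FF x 1 (d - 1) * FF x 2 (d - 1)) := by
  rcases Nat.lt_or_ge d 3 with h2 | h3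
  · -- d = 2
    have hd2 : d = 2 := by omega
    subst hd2
    have hGf : G = fun s => s * (1 - s) := by
      funext s
      rw [hG s]
      norm_num [FF_one, FF_two, Frec, Finset.Icc_self]
    have hda : HasDerivAt (fun s : ℝ => s * (1 - s)) (1 * (1 - x 1) + x 1 * (0 - 1)) (x 1) :=
      (hasDerivAt_id (x 1)).mul ((hasDerivAt_const (x 1) (1:ℝ)).sub (hasDerivAt_id (x 1)))
    have hderiv : deriv G (x 1) = 1 - 2 * x 1 := by
      rw [hGf, hda.deriv]; ring
    norm_num [FF_one, FF_two, Frec, Finset.Icc_self, hderiv]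
    constructor <;> constructor <;> intro h <;> linarith
  · -- d ≥ 3
    obtain ⟨k, rfl⟩ : ∃ k, d = k + 3 := ⟨d - 3, by omega⟩
    simp only [show k+3-1 = k+2 from rfl, show k+3-2 = k+1 from rfl] at hpos hFpos hG ⊢
    simp only [FF_one, FF_two, show (k+2)-1 = k+1 from rfl]
    set z : ℕ → ℝ := fun i => x (i+1) with hz
    set s0 := x (k+2) with hs0
    set Q := ∏ j ∈ Finset.Icc 1 (k+1), x j with hQdef
    set A := Frec (k+2) x with hA
    set B := Frec (k+1) x with hB
    set B' := Frec k x with hB'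
    set C := Frec (k+1) z with hC
    set Cc := Frec k z with hCc
    set Cc' := Frec (k-1) z with hCc'
    -- basic facts
    have hF : ∀ i, i ≤ k+2 → 0 < Frec i x := by
      intro i hi
      rcases Nat.eq_zero_or_pos i with h0 | h1
      · subst h0; norm_num [Frec]
      · have := hFpos i h1 hi; rwa [FF_one] at this
    have hBpos : 0 < B := hF (k+1) (by omega)
    have hQpos : 0 < Q := by
      rw [hQdef]
      exact Finset.prod_pos fun i hi => by
        rw [Finset.mem_Icc] at hi; exact hpos i hi.1 (by omega)
    have hzpos : ∀ j, j ≤ k+1 → 0 < Frec j z := by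
      intro j
      induction j with
      | zero => intro _; norm_num [Frec]
      | succ j ih =>
        intro hj
        have hW := Wlem (j+1) x
        rw [show (j+1)-1 = j from rfl, ← hz] at hW
        have hpp : 0 < ∏ i ∈ Finset.Icc 1 (j+2), x i :=
          Finset.prod_pos fun i hi => by
            rw [Finset.mem_Icc] at hi; exact hpos i hi.1 (by omega)
        have h1 : 0 < Frec (j+1) x := hF (j+1) (by omega)
        have h2 : 0 < Frec (j+2) x := hF (j+2) (by omega)
        have h3 : 0 < Frec j z := ih (by omega)
        nlinarith [hW, hpp, h1, h2, h3, mul_pos h2 h3]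
    have hCpos : 0 < C := by rw [hC]; exact hzpos (k+1) le_rfl
    -- linear structure
    have hAeq : A = B - s0 * B' := by
      rw [hA, hB, hB', hs0, Frec_succ (k+1) x, show (k+1)-1 = k from rfl]
    have hCeq : C = Cc - s0 * Cc' := by
      rw [hC, hCc, hCc', hs0, Frec_succ k z, hz]
    -- formulas for the updated point
    have hprod : ∀ s : ℝ, (∏ j ∈ Finset.Icc 1 (k+2), Function.update x (k+3-1) s j) = Q * s := by
      intro s
      rw [Finset.prod_Icc_succ_top (by omega : 1 ≤ k + 2)]
      rw [show k+3-1 = k+2 from rfl, Function.update_self]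
      congr 1
      rw [hQdef]
      refine Finset.prod_congr rfl fun i hi => ?_
      rw [Finset.mem_Icc] at hi
      exact Function.update_of_ne (by omega) _ _
    have hFA : ∀ s : ℝ, FF (Function.update x (k+2) s) 1 (k+2) = B - s * B' := by
      intro s
      rw [FF_one, Frec_succ (k+1), show (k+1)-1 = k from rfl, Function.update_self,
        Frec_congr (k+1) (Function.update x (k+2) s) x
          (fun i h1 h2 => Function.update_of_ne (by omega) _ _),
        Frec_congr k (Function.update x (k+2) s) x
          (fun i h1 h2 => Function.update_of_ne (by omega) _ _), ← hB, ← hB']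
    have hFB : ∀ s : ℝ, FF (Function.update x (k+2) s) 1 (k+1) = B := by
      intro s
      rw [FF_one, Frec_congr (k+1) (Function.update x (k+2) s) x
          (fun i h1 h2 => Function.update_of_ne (by omega) _ _), ← hB]
    have hwcongr : ∀ (s : ℝ) (m : ℕ), m ≤ k →
        Frec m (fun i => Function.update x (k+2) s (i+1)) = Frec m z := by
      intro s m hm
      refine Frec_congr m _ _ fun i h1 h2 => ?_
      rw [Function.update_of_ne (by omega), hz]
    have hFC : ∀ s : ℝ, FF (Function.update x (k+2) s) 2 (k+2) = Cc - s * Cc' := by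
      intro s
      rw [FF_two, show (k+2)-1 = k+1 from rfl, Frec_succ k]
      simp only [Function.update_self]
      rw [hwcongr s k le_rfl, hwcongr s (k-1) (by omega), ← hCc, ← hCc']
    have hGf : G = fun s => Q * s * (B - s * B') / (B * (Cc - s * Cc')) := by
      funext s
      rw [hG s, show (∏ j ∈ Finset.Icc 1 (k+2), Function.update x (k+2) s j) = Q * s from hprod s, hFA s, hFB s, hFC s]
    -- derivative
    have hDne : B * (Cc - s0 * Cc') ≠ 0 := by
      rw [← hCeq]; exact (mul_pos hBpos hCpos).ne'
    have hN : HasDerivAt (fun s : ℝ => Q * s * (B - s * B'))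
        (Q * 1 * (B - s0 * B') + Q * s0 * (0 - 1 * B')) s0 :=
      HasDerivAt.mul ((hasDerivAt_id s0).const_mul Q)
        ((hasDerivAt_const s0 B).sub ((hasDerivAt_id s0).mul_const B'))
    have hD : HasDerivAt (fun s : ℝ => B * (Cc - s * Cc')) (B * (0 - 1 * Cc')) s0 :=
      ((hasDerivAt_const s0 Cc).sub ((hasDerivAt_id s0).mul_const Cc')).const_mul B
    have hderiv : deriv G s0 =
        ((Q * 1 * (B - s0 * B') + Q * s0 * (0 - 1 * B')) * (B * (Cc - s0 * Cc'))
          - Q * s0 * (B - s0 * B') * (B * (0 - 1 * Cc'))) / (B * (Cc - s0 * Cc')) ^ 2 := by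
      rw [hGf]
      exact (hN.div hD hDne).deriv
    -- the identity
    have hid : B' * C - A * Cc' = Q := by
      rw [hB', hC, hA, hCc', hQdef, hz]
      exact ident k x
    have key : deriv G s0 = 0 ↔ A * C = s0 * Q := by
      rw [hderiv, div_eq_zero_iff]
      have hd2 : (B * (Cc - s0 * Cc')) ^ 2 ≠ 0 := pow_ne_zero _ hDne
      simp only [hd2, or_false]
      have hnum : (Q * 1 * (B - s0 * B') + Q * s0 * (0 - 1 * B')) * (B * (Cc - s0 * Cc'))
          - Q * s0 * (B - s0 * B') * (B * (0 - 1 * Cc'))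
          = Q * B * (A * C - s0 * Q) := by
        rw [← hCeq, ← hAeq]
        linear_combination (-(Q * s0 * B)) * hid
      rw [hnum, mul_eq_zero, mul_eq_zero]
      constructor
      · rintro (⟨hq | hb⟩ | hs)
        · exact absurd hq hQpos.ne'
        · exact absurd hb hBpos.ne'
        · linarith [sub_eq_zero.mp hs]
      · intro h
        right
        rw [sub_eq_zero]
        exact h
    have hprod2 : (∏ j ∈ Finset.Icc 1 (k+2), x j) = Q * s0 := by
      rw [Finset.prod_Icc_succ_top (by omega : 1 ≤ k + 2), ← hQdef, ← hs0]
    refine ⟨?_, ?_⟩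
    · rw [key, hprod2, div_eq_div_iff hBpos.ne' (mul_pos hBpos hCpos).ne']
      constructor
      · intro h; linear_combination B * h
      · intro h
        have h2 : (A * C - s0 * Q) * B = 0 := by linear_combination h
        rcases mul_eq_zero.mp h2 with h4 | h4
        · linarith
        · exact absurd h4 hBpos.ne'
    · rw [key, hprod2]
      constructor <;> intro h <;> linear_combination -h
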